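/- There exists a weak Schur partition of {1,...,185} into 5 subsets; hence WS(5) ≥ 185. -/

import Mathlib

set_option maxRecDepth 10000000
set_option maxHeartbeats 10000000

def WeaklySumFree (S : Finset ℕ) : Prop :=
  ∀ a ∈ S, ∀ b ∈ S, ∀ c ∈ S, a ≠ b → a ≠ c → b ≠ c → a + b ≠ c

def IsWeakSchurPartition (s n : ℕ) (P : Fin s → Finset ℕ) : Prop :=
  (∀ i, (P i).Nonempty) ∧ (∀ i j, i ≠ j → Disjoint (P i) (P j)) ∧
  (Finset.univ.biUnion P = Finset.Icc 1 n) ∧ (∀ i, WeaklySumFree (P i))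

noncomputable def WS (s : ℕ) : ℕ :=
  sSup {n | ∃ P : Fin s → Finset ℕ, IsWeakSchurPartition s n P}

lemma wsf_of_pairs (S : Finset ℕ) (h : ∀ a ∈ S, ∀ b ∈ S, a < b → a + b ∉ S) :
    WeaklySumFree S := by
  intro a ha b hb c hc hab _ _ habc
  rcases lt_or_gt_of_ne hab with h1 | h1
  · exact h a ha b hb h1 (habc ▸ hc)
  · exact h b hb a ha h1 (by rw [Nat.add_comm] at habc; exact habc ▸ hc)

def A0 : Finset ℕ := {67,69,70,71,72,73,74,75,76,77,78,79,80,81,82,83,84,85,86,87,88,89,90,91,92,93,94,95,96,97,98,99,100,101,102,103,104,105,106,107,108,109,110,111,112,113,114,115,116,117,118,119,120,121,122,123,124,125,126,127,128,129,130,131,132,133,134,135}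
def A1 : Finset ℕ := {3,5,6,7,19,21,23,51,52,53,64,65,66,136,147,182,183,184}
def A2 : Finset ℕ := {9,10,12,13,14,15,16,17,18,20,54,55,56,57,58,59,60,61,62,137,138,139,140,141,142,143,144,145,173,174,175,176,177,178,179,180,181}
def A3 : Finset ℕ := {24,26,27,28,29,30,31,32,33,34,35,36,37,38,39,40,41,42,43,44,45,46,47,48,49,148,149,150,151,152,153,154,155,156,157,158,159,160,161,162,163,164,165,166,167,168,169,170,171}
def A4 : Finset ℕ := {1,2,4,8,11,22,25,50,63,68,146,172,185}

def Ppart : Fin 5 → Finset ℕ := ![A0, A1, A2, A3, A4]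

lemma hA0 : WeaklySumFree A0 := wsf_of_pairs A0 (by decide)
lemma hA1 : WeaklySumFree A1 := wsf_of_pairs A1 (by decide)
lemma hA2 : WeaklySumFree A2 := wsf_of_pairs A2 (by decide)
lemma hA3 : WeaklySumFree A3 := wsf_of_pairs A3 (by decide)
lemma hA4 : WeaklySumFree A4 := wsf_of_pairs A4 (by decide)

lemma part185 : IsWeakSchurPartition 5 185 Ppart := by
  refine ⟨?_, ?_, ?_, ?_⟩
  · decide
  · decide
  · decide
  · intro i
    fin_cases i
    · exact hA0
    · exact hA1
    · exact hA2
    · exact hA3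
    · exact hA4

section Ramsey

lemma chainA (col : ℕ → Fin 5) (m : ℕ) : ∀ (X : Finset ℕ), 6 ^ m ≤ X.card →
    ∃ p : List ℕ, p.length = m ∧ p.Pairwise (· < ·) ∧ (∀ x ∈ p, x ∈ X) ∧
      ∀ a ∈ p, ∀ b ∈ p, ∀ b' ∈ p, a < b → a < b' → col (b - a) = col (b' - a) := by
  induction m with
  | zero => intro X _; exact ⟨[], rfl, List.Pairwise.nil, by simp, by simp⟩
  | succ m ih =>
    intro X hX
    have hpow : (1:ℕ) ≤ 6 ^ m := Nat.one_le_pow _ _ (by norm_num)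
    have hpow6 : 6 ^ (m+1) = 6 * 6 ^ m := by ring
    have hne : X.Nonempty := Finset.card_pos.mp (by nlinarith [X.card])
    set x0 := X.min' hne with hx0def
    have hx0 : x0 ∈ X := X.min'_mem hne
    have hcard : (X.erase x0).card = X.card - 1 := Finset.card_erase_of_mem hx0
    have hmaps : ∀ y ∈ X.erase x0, (fun y => col (y - x0)) y ∈ (Finset.univ : Finset (Fin 5)) := by
      intro y _; exact Finset.mem_univ _
    have hlt : (Finset.univ : Finset (Fin 5)).card * (6 ^ m - 1) < (X.erase x0).card := by
      rw [Finset.card_univ, Fintype.card_fin, hcard]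
      omega
    obtain ⟨i, _, hi⟩ := Finset.exists_lt_card_fiber_of_mul_lt_card_of_maps_to hmaps hlt
    set Y := (X.erase x0).filter (fun y => col (y - x0) = i) with hYdef
    have hYcard : 6 ^ m ≤ Y.card := by omega
    obtain ⟨p, hlen, hsort, hmem, hprop⟩ := ih Y hYcard
    have hYX : ∀ y ∈ Y, y ∈ X ∧ x0 < y ∧ col (y - x0) = i := by
      intro y hy
      rw [hYdef, Finset.mem_filter, Finset.mem_erase] at hy
      refine ⟨hy.1.2, lt_of_le_of_ne (X.min'_le y hy.1.2) (Ne.symm hy.1.1), hy.2⟩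
    refine ⟨x0 :: p, by simp [hlen], ?_, ?_, ?_⟩
    · rw [List.pairwise_cons]
      exact ⟨fun y hy => (hYX y (hmem y hy)).2.1, hsort⟩
    · intro x hx
      rcases List.mem_cons.mp hx with h | h
      · exact h ▸ hx0
      · exact (hYX x (hmem x h)).1
    · intro a ha b hb b' hb' hab hab'
      have hmemp : ∀ z ∈ (x0 :: p), x0 < z → z ∈ p := by
        intro z hz hz2
        rcases List.mem_cons.mp hz with h | h
        · omega
        · exact h
      rcases List.mem_cons.mp ha with h | h
      · subst h
        rw [(hYX b (hmem b (hmemp b hb hab))).2.2,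
            (hYX b' (hmem b' (hmemp b' hb' hab'))).2.2]
      · have hx0a : x0 < a := (hYX a (hmem a h)).2.1
        exact hprop a h b (hmemp b hb (by omega)) b' (hmemp b' hb' (by omega)) hab hab'

lemma list_four {α : Type*} (l : List α) (h : l.length = 4) :
    ∃ w x y z, l = [w, x, y, z] := by
  match l, h with
  | [w, x, y, z], _ => exact ⟨w, x, y, z, rfl⟩

lemma ws_bound (n : ℕ) (P : Fin 5 → Finset ℕ) (h : IsWeakSchurPartition 5 n P) :
    n < 6 ^ 17 := by
  by_contra hn
  push_neg at hn
  obtain ⟨_, _, hcover, hwsf⟩ := h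
  classical
  set col : ℕ → Fin 5 := fun d => if h : ∃ i, d ∈ P i then h.choose else 0 with hcoldef
  have hcol : ∀ d, 1 ≤ d → d ≤ n → d ∈ P (col d) := by
    intro d h1 h2
    have hd : d ∈ Finset.univ.biUnion P := by
      rw [hcover]; exact Finset.mem_Icc.mpr ⟨h1, h2⟩
    rw [Finset.mem_biUnion] at hd
    obtain ⟨i, _, hdi⟩ := hd
    have hex : ∃ i, d ∈ P i := ⟨i, hdi⟩
    rw [hcoldef]
    simp only [dif_pos hex]
    exact hex.choose_spec
  obtain ⟨p, hlen, hsort, hmem, hprop⟩ := chainA col 17 (Finset.Icc 0 n)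
    (by rw [Nat.card_Icc]; omega)
  have hnd : p.Nodup := hsort.nodup
  set F := p.toFinset with hFdef
  have hFcard : F.card = 17 := by rw [hFdef, List.toFinset_card_of_nodup hnd, hlen]
  have hFne : F.Nonempty := Finset.card_pos.mp (by omega)
  set L := F.max' hFne with hLdef
  have hLp : L ∈ p := List.mem_toFinset.mp (F.max'_mem hFne)
  have hle : ∀ a ∈ F, a ≠ L → a < L := by
    intro a ha hne
    exact lt_of_le_of_ne (F.le_max' a ha) hne
  have hecard : (F.erase L).card = 16 := by
    rw [Finset.card_erase_of_mem (F.max'_mem hFne)]; omega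
  have hmaps : ∀ a ∈ F.erase L, (fun a => col (L - a)) a ∈ (Finset.univ : Finset (Fin 5)) :=
    fun a _ => Finset.mem_univ _
  have hlt : (Finset.univ : Finset (Fin 5)).card * 3 < (F.erase L).card := by
    rw [Finset.card_univ, Fintype.card_fin]; omega
  obtain ⟨i, _, hi⟩ := Finset.exists_lt_card_fiber_of_mul_lt_card_of_maps_to hmaps hlt
  obtain ⟨T, hTsub, hTcard⟩ := Finset.exists_subset_card_eq
    (s := (F.erase L).filter (fun a => col (L - a) = i)) (n := 4) (by omega)
  -- key: all pairs in T have color i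
  have hTprop : ∀ a ∈ T, a ∈ p ∧ a < L ∧ col (L - a) = i := by
    intro a ha
    have h1 := hTsub ha
    rw [Finset.mem_filter] at h1
    obtain ⟨h2, h3⟩ := h1
    rw [Finset.mem_erase] at h2
    exact ⟨List.mem_toFinset.mp h2.2, hle a h2.2 h2.1, h3⟩
  have hpair : ∀ a ∈ T, ∀ b ∈ T, a < b → col (b - a) = i := by
    intro a ha b hb hab
    obtain ⟨hap, haL, hai⟩ := hTprop a ha
    obtain ⟨hbp, hbL, _⟩ := hTprop b hb
    rw [hprop a hap b hbp L hLp hab (by omega)]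
    exact hai
  -- extract 4 sorted elements
  have hsortT : (T.sort (· ≤ ·)).Pairwise (· < ·) := (Finset.sortedLT_sort T).pairwise
  have hlenT : (T.sort (· ≤ ·)).length = 4 := by rw [Finset.length_sort, hTcard]
  set l := T.sort (· ≤ ·) with hldef
  obtain ⟨w, x, y, z, hl⟩ := list_four l hlenT
  have hmemT : ∀ a ∈ l, a ∈ T := fun a ha => (Finset.mem_sort _).mp ha
  rw [hl] at hsortT hmemT
  simp only [List.pairwise_cons, List.mem_cons, List.not_mem_nil] at hsortT
  have hwx : w < x := by tauto
  have hxy : x < y := by tauto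
  have hyz : y < z := by tauto
  have hwT : w ∈ T := hmemT w (by simp)
  have hxT : x ∈ T := hmemT x (by simp)
  have hyT : y ∈ T := hmemT y (by simp)
  have hzT : z ∈ T := hmemT z (by simp)
  -- bounds: elements are in Icc 0 n
  have hbnd : ∀ a ∈ T, a ≤ n := by
    intro a ha
    have := hmem a (hTprop a ha).1
    rw [Finset.mem_Icc] at this
    exact this.2
  have hzn : z ≤ n := hbnd z hzT
  -- all relevant differences have color i, hence are in P i
  have hPI : ∀ a ∈ T, ∀ b ∈ T, a < b → b - a ∈ P i := by
    intro a ha b hb hab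
    have h1 := hpair a ha b hb hab
    have h2 : b ≤ n := hbnd b hb
    have := hcol (b - a) (by omega) (by omega)
    rwa [h1] at this
  have d1 := hPI w hwT x hxT hwx
  have d2 := hPI x hxT z hzT (by omega)
  have d3 := hPI w hwT z hzT (by omega)
  have d4 := hPI w hwT y hyT (by omega)
  have d5 := hPI y hyT z hzT hyz
  by_cases hc : x - w = z - x
  · -- then y - w ≠ z - y
    have hne1 : y - w ≠ z - y := by omega
    exact hwsf i (y - w) d4 (z - y) d5 (z - w) d3 hne1 (by omega) (by omega) (by omega)
  · exact hwsf i (x - w) d1 (z - x) d2 (z - w) d3 hc (by omega) (by omega) (by omega)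

end Ramsey

theorem stmt14 :
    (∃ P : Fin 5 → Finset ℕ, IsWeakSchurPartition 5 185 P) ∧ 185 ≤ WS 5 := by
  have hmem : (185 : ℕ) ∈ {n | ∃ P : Fin 5 → Finset ℕ, IsWeakSchurPartition 5 n P} :=
    ⟨Ppart, part185⟩
  refine ⟨⟨Ppart, part185⟩, le_csSup ?_ hmem⟩
  exact ⟨6 ^ 17, fun n ⟨P, hP⟩ => le_of_lt (ws_bound n P hP)⟩
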